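/- The BGK operator satisfies the H-theorem inequality: ∫ Q^{BGK}[f](v) log f(v) dv ≤ 0, with equality if and only if f = M[f] almost everywhere. -/

import Mathlib

set_option maxHeartbeats 2000000

open MeasureTheory Real Set Filter



lemma integrable_sq_mul_gauss {b : ℝ} (hb : 0 < b) :
    Integrable (fun x : ℝ => x ^ 2 * Real.exp (-b * x ^ 2)) := by
  have h := integrable_rpow_mul_exp_neg_mul_sq hb (s := 2) (by norm_num)
  have : ∀ x : ℝ, x ^ (2 : ℝ) = x ^ (2 : ℕ) := fun x => by
    rw [← Real.rpow_natCast x 2]; norm_num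
  simpa [this] using h

lemma gauss_moment_1d {b : ℝ} (hb : 0 < b) :
    ∫ x : ℝ, x ^ 2 * Real.exp (-b * x ^ 2) = (1 / (2 * b)) * Real.sqrt (π / b) := by
  have hint2 := integrable_sq_mul_gauss hb
  have hinte := integrable_exp_neg_mul_sq hb
  have tend : Tendsto (fun x : ℝ => x * Real.exp (-b * x ^ 2)) atTop (nhds 0) := by
    have h := (tendsto_rpow_abs_mul_exp_neg_mul_sq_cocompact hb 1).mono_left
      _root_.atTop_le_cocompact
    apply h.congr'
    filter_upwards [eventually_ge_atTop (0:ℝ)] with x hx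
    rw [abs_of_nonneg hx, Real.rpow_one]
  have key : ∫ x in Ioi (0:ℝ),
      (Real.exp (-b * x ^ 2) - 2 * b * (x ^ 2 * Real.exp (-b * x ^ 2))) = 0 := by
    have hderiv : ∀ x ∈ Ici (0:ℝ), HasDerivAt (fun x : ℝ => x * Real.exp (-b * x ^ 2))
        (Real.exp (-b * x ^ 2) - 2 * b * (x ^ 2 * Real.exp (-b * x ^ 2))) x := by
      intro x _
      have h1 : HasDerivAt (fun x : ℝ => -b * x ^ 2) (-b * (2 * x)) x := by
        simpa using (hasDerivAt_pow 2 x).const_mul (-b)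
      have h2 := (hasDerivAt_id x).mul h1.exp
      simp only [id_eq, Pi.mul_def] at h2
      exact h2.congr_deriv (by ring)
    have h := integral_Ioi_of_hasDerivAt_of_tendsto' hderiv
      ((hinte.sub (hint2.const_mul (2*b))).integrableOn) tend
    simpa using h
  have hsub : ∫ x in Ioi (0:ℝ), Real.exp (-b * x ^ 2)
      = 2 * b * ∫ x in Ioi (0:ℝ), x ^ 2 * Real.exp (-b * x ^ 2) := by
    rw [MeasureTheory.integral_sub hinte.integrableOn ((hint2.const_mul (2*b)).integrableOn),
      MeasureTheory.integral_const_mul] at key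
    linarith
  have e1 : ∫ x : ℝ, x ^ 2 * Real.exp (-b * x ^ 2)
      = 2 * ∫ x in Ioi (0:ℝ), x ^ 2 * Real.exp (-b * x ^ 2) := by
    rw [← integral_comp_abs (f := fun t => t ^ 2 * Real.exp (-b * t ^ 2))]
    simp [sq_abs]
  have e2 : Real.sqrt (π / b) = 2 * ∫ x in Ioi (0:ℝ), Real.exp (-b * x ^ 2) := by
    rw [← integral_gaussian, ← integral_comp_abs (f := fun t => Real.exp (-b * t ^ 2))]
    simp [sq_abs]
  rw [e1]
  rw [hsub] at e2
  field_simp at e2 ⊢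
  linarith


lemma gauss_pi (d : ℕ) {b : ℝ} (hb : 0 < b) :
    Integrable (fun x : Fin d → ℝ => (∑ i, (x i)^2) * Real.exp (-b * ∑ i, (x i)^2)) ∧
    ∫ x : Fin d → ℝ, (∑ i, (x i)^2) * Real.exp (-b * ∑ i, (x i)^2)
      = ((d:ℝ) / (2*b)) * Real.sqrt (π/b) ^ d := by
  classical
  set g : Fin d → Fin d → ℝ → ℝ :=
    fun i j t => (if j = i then t^2 else 1) * Real.exp (-b*t^2) with hg
  have hgint : ∀ i j, Integrable (g i j) := by
    intro i j
    by_cases h : j = i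
    · simpa [hg, h] using integrable_sq_mul_gauss hb
    · simpa [hg, h] using integrable_exp_neg_mul_sq hb
  have hrw : ∀ x : Fin d → ℝ, (∑ i, (x i)^2) * Real.exp (-b * ∑ i, (x i)^2)
      = ∑ i, ∏ j, g i j (x j) := by
    intro x
    have hexp : Real.exp (-b * ∑ i, (x i)^2) = ∏ j, Real.exp (-b * (x j)^2) := by
      rw [← Real.exp_sum]
      congr 1
      rw [Finset.mul_sum]
    rw [hexp, Finset.sum_mul]
    refine Finset.sum_congr rfl fun i _ => ?_
    simp only [hg]
    rw [Finset.prod_mul_distrib, Finset.prod_ite_eq' Finset.univ i (fun j => (x j)^2)]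
    simp
  have hprod_int : ∀ i, Integrable (fun x : Fin d → ℝ => ∏ j, g i j (x j)) :=
    fun i => Integrable.fintype_prod (fun j => hgint i j)
  have hint : Integrable
      (fun x : Fin d → ℝ => (∑ i, (x i)^2) * Real.exp (-b * ∑ i, (x i)^2)) := by
    refine (integrable_finset_sum Finset.univ (fun i _ => hprod_int i)).congr ?_
    filter_upwards with x using (hrw x).symm
  refine ⟨hint, ?_⟩
  rw [integral_congr_ae (Filter.Eventually.of_forall hrw),
    integral_finset_sum _ (fun i _ => hprod_int i)]
  have hone : ∀ i, ∫ x : Fin d → ℝ, ∏ j, g i j (x j)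
      = (1/(2*b)) * Real.sqrt (π/b) ^ d := by
    intro i
    rw [integral_fintype_prod_volume_eq_prod]
    have h1 : ∀ j, ∫ t : ℝ, g i j t
        = (if j = i then (1/(2*b)) else 1) * Real.sqrt (π/b) := by
      intro j; by_cases h : j = i
      · subst h
        simp only [hg, if_pos rfl]
        simpa using gauss_moment_1d hb
      · simp only [hg, if_neg h, one_mul]
        exact integral_gaussian b
    rw [Finset.prod_congr rfl fun j _ => h1 j, Finset.prod_mul_distrib,
      Finset.prod_ite_eq' Finset.univ i (fun _ => (1:ℝ)/(2*b)), Finset.prod_const]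
    simp
  rw [Finset.sum_congr rfl fun i _ => hone i, Finset.sum_const]
  simp only [Finset.card_univ, Fintype.card_fin, nsmul_eq_mul]
  ring


lemma euclid_norm_symm (d : ℕ) (x : Fin d → ℝ) :
    ‖(MeasurableEquiv.toLp 2 (Fin d → ℝ)) x‖^2 = ∑ i, (x i)^2 := by
  rw [EuclideanSpace.norm_eq, Real.sq_sqrt (Finset.sum_nonneg fun i _ => sq_nonneg _)]
  simp [sq_abs]

lemma sqrt_pow_eq_rpow (d : ℕ) {b : ℝ} (hb : 0 < b) :
    Real.sqrt (π/b) ^ d = (π/b) ^ ((d:ℝ)/2) := by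
  rw [Real.sqrt_eq_rpow, ← Real.rpow_natCast ((π/b) ^ ((1:ℝ)/2)) d,
    ← Real.rpow_mul (le_of_lt (div_pos pi_pos hb))]
  congr 1
  ring

lemma gauss_euclid0 (d : ℕ) {b : ℝ} (hb : 0 < b) :
    Integrable (fun v : EuclideanSpace ℝ (Fin d) => Real.exp (-b * ‖v‖^2)) ∧
    ∫ v : EuclideanSpace ℝ (Fin d), Real.exp (-b * ‖v‖^2) = (π/b) ^ ((d:ℝ)/2) := by
  constructor
  · have hpi : Integrable (fun x : Fin d → ℝ => ∏ j, Real.exp (-b * (x j)^2)) :=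
      Integrable.fintype_prod (fun _ => integrable_exp_neg_mul_sq hb)
    refine (((EuclideanSpace.volume_preserving_symm_measurableEquiv_toLp (Fin d)).symm).integrable_comp_emb
      (MeasurableEquiv.measurableEmbedding _)).mp ?_
    refine hpi.congr ?_
    filter_upwards with x
    simp only [Function.comp_apply, MeasurableEquiv.symm_symm]
    rw [← Real.exp_sum, euclid_norm_symm d x, ← Finset.mul_sum]
  · rw [GaussianFourier.integral_rexp_neg_mul_sq_norm hb]
    congr 1
    simp
lemma gauss_euclid2 (d : ℕ) {b : ℝ} (hb : 0 < b) :
    Integrable (fun v : EuclideanSpace ℝ (Fin d) => ‖v‖^2 * Real.exp (-b * ‖v‖^2)) ∧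
    ∫ v : EuclideanSpace ℝ (Fin d), ‖v‖^2 * Real.exp (-b * ‖v‖^2)
      = ((d:ℝ) / (2*b)) * (π/b) ^ ((d:ℝ)/2) := by
  obtain ⟨hi, hv⟩ := gauss_pi d hb
  have heq : ∀ x : Fin d → ℝ,
      (∑ i, (x i)^2) * Real.exp (-b * ∑ i, (x i)^2)
      = ‖(MeasurableEquiv.toLp 2 (Fin d → ℝ)) x‖^2
        * Real.exp (-b * ‖(MeasurableEquiv.toLp 2 (Fin d → ℝ)) x‖^2) := by
    intro x; rw [euclid_norm_symm d x]
  constructor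
  · refine (((EuclideanSpace.volume_preserving_symm_measurableEquiv_toLp (Fin d)).symm).integrable_comp_emb
      (MeasurableEquiv.measurableEmbedding _)).mp ?_
    refine hi.congr ?_
    filter_upwards with x
    simp only [Function.comp_apply]
    exact heq x
  · rw [← ((EuclideanSpace.volume_preserving_symm_measurableEquiv_toLp (Fin d)).symm).integral_comp
      (MeasurableEquiv.measurableEmbedding _)]
    rw [← sqrt_pow_eq_rpow d hb, ← hv]
    exact integral_congr_ae (Filter.Eventually.of_forall fun x => (heq x).symm)


theorem bgk_H_theorem
    (d : ℕ) (ν : ℝ) (hν : 0 < ν)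
    (f : EuclideanSpace ℝ (Fin d) → ℝ)
    (hf_pos : ∀ v, 0 < f v)
    (hf_int : Integrable f)
    (hf_mom2 : Integrable (fun v => ‖v‖ ^ 2 * f v))
    (hf_log : Integrable (fun v => f v * Real.log (f v)))
    (ρ : ℝ) (hρ : ρ = ∫ v, f v)
    (U : EuclideanSpace ℝ (Fin d))
    (hU : ∀ i : Fin d, U i = (1 / ρ) * ∫ v, v i * f v)
    (T : ℝ) (hT : T = (1 / (d * ρ)) * ∫ v, ‖v - U‖ ^ 2 * f v) (hT_pos : 0 < T)
    (M : EuclideanSpace ℝ (Fin d) → ℝ)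
    (hM : ∀ v, M v = ρ / (2 * π * T) ^ ((d : ℝ) / 2) * Real.exp (-‖v - U‖ ^ 2 / (2 * T)))
    (hQlog_int : Integrable (fun v => ν * (M v - f v) * Real.log (f v))) :
    (∫ v, ν * (M v - f v) * Real.log (f v)) ≤ 0 ∧
    ((∫ v, ν * (M v - f v) * Real.log (f v)) = 0 ↔ f =ᵐ[volume] M) := by
  -- basic positivity facts
  have hρ_pos : 0 < ρ := by
    rw [hρ, integral_pos_iff_support_of_nonneg (fun v => (hf_pos v).le) hf_int]
    have hsupp : Function.support f = univ := by
      ext v; simp [Function.mem_support, (hf_pos v).ne']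
    rw [hsupp]
    exact isOpen_univ.measure_pos volume univ_nonempty
  have hd0 : (d : ℝ) ≠ 0 := by
    intro h
    rw [h] at hT
    simp only [zero_mul, div_zero, one_div, inv_zero] at hT
    rw [hT] at hT_pos
    simp at hT_pos
  set b : ℝ := 1 / (2 * T) with hbdef
  have hb : 0 < b := by positivity
  have hπb : π / b = 2 * π * T := by
    rw [hbdef]; field_simp
  have h2πT_pos : (0:ℝ) < 2 * π * T := by positivity
  set c : ℝ := ρ / (2 * π * T) ^ ((d : ℝ) / 2) with hcdef
  have hpow_pos : (0:ℝ) < (2 * π * T) ^ ((d : ℝ) / 2) := rpow_pos_of_pos h2πT_pos _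
  have hc_pos : 0 < c := div_pos hρ_pos hpow_pos
  have hMrw : ∀ v, M v = c * Real.exp (-b * ‖v - U‖ ^ 2) := by
    intro v
    rw [hM v, hcdef]
    congr 1
    rw [hbdef]
    ring
  -- Gaussian integrals, translated
  obtain ⟨hE0_int, hE0_val⟩ := gauss_euclid0 d hb
  obtain ⟨hE2_int, hE2_val⟩ := gauss_euclid2 d hb
  have hE_int : Integrable (fun v : EuclideanSpace ℝ (Fin d) =>
      Real.exp (-b * ‖v - U‖ ^ 2)) := hE0_int.comp_sub_right U
  have hE_val : ∫ v : EuclideanSpace ℝ (Fin d), Real.exp (-b * ‖v - U‖ ^ 2)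
      = (2 * π * T) ^ ((d:ℝ)/2) := by
    rw [integral_sub_right_eq_self (fun v : EuclideanSpace ℝ (Fin d) =>
      Real.exp (-b * ‖v‖ ^ 2)) U, hE0_val, hπb]
  have hqE_int : Integrable (fun v : EuclideanSpace ℝ (Fin d) =>
      ‖v - U‖ ^ 2 * Real.exp (-b * ‖v - U‖ ^ 2)) := hE2_int.comp_sub_right U
  have hqE_val : ∫ v : EuclideanSpace ℝ (Fin d), ‖v - U‖ ^ 2 * Real.exp (-b * ‖v - U‖ ^ 2)
      = (d : ℝ) * T * (2 * π * T) ^ ((d:ℝ)/2) := by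
    rw [integral_sub_right_eq_self (fun v : EuclideanSpace ℝ (Fin d) =>
      ‖v‖ ^ 2 * Real.exp (-b * ‖v‖ ^ 2)) U, hE2_val, hπb]
    rw [hbdef]
    have : (d:ℝ) / (2 * (1 / (2 * T))) = (d:ℝ) * T := by
      field_simp
    rw [this]
  -- integrability and values for M
  have hM_int : Integrable M := by
    refine (hE_int.const_mul c).congr ?_
    filter_upwards with v using (hMrw v).symm
  have hM_val : ∫ v, M v = ρ := by
    rw [integral_congr_ae (Eventually.of_forall hMrw), MeasureTheory.integral_const_mul,
      hE_val, hcdef]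
    field_simp
  have hqM_int : Integrable (fun v => ‖v - U‖ ^ 2 * M v) := by
    refine (hqE_int.const_mul c).congr ?_
    filter_upwards with v
    simp only [hMrw]; ring
  have hqM_val : ∫ v, ‖v - U‖ ^ 2 * M v = (d : ℝ) * ρ * T := by
    have : ∫ v, ‖v - U‖ ^ 2 * M v
        = ∫ v : EuclideanSpace ℝ (Fin d), c * (‖v - U‖ ^ 2 * Real.exp (-b * ‖v - U‖ ^ 2)) := by
      refine integral_congr_ae (Eventually.of_forall fun v => ?_)
      simp only [hMrw]; ring
    rw [this, MeasureTheory.integral_const_mul, hqE_val, hcdef]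
    field_simp
  -- integrability and value for the second moment of f
  have hqf_int : Integrable (fun v => ‖v - U‖ ^ 2 * f v) := by
    have hbound : Integrable (fun v : EuclideanSpace ℝ (Fin d) =>
        2 * (‖v‖ ^ 2 * f v) + (2 * ‖U‖ ^ 2) * f v) :=
      (hf_mom2.const_mul 2).add (hf_int.const_mul (2 * ‖U‖ ^ 2))
    refine hbound.mono' ?_ ?_
    · exact (((continuous_id.sub continuous_const).norm.pow 2).aestronglyMeasurable).mul
        hf_int.aestronglyMeasurable
    · filter_upwards with v
      have h1 : ‖v - U‖ ≤ ‖v‖ + ‖U‖ := norm_sub_le v U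
      have h2 : ‖v - U‖ ^ 2 ≤ 2 * ‖v‖ ^ 2 + 2 * ‖U‖ ^ 2 := by
        nlinarith [norm_nonneg (v - U), norm_nonneg v, norm_nonneg U,
          sq_nonneg (‖v‖ - ‖U‖), sq_nonneg (‖v‖ + ‖U‖)]
      have h3 : 0 ≤ f v := (hf_pos v).le
      rw [Real.norm_eq_abs, abs_of_nonneg (by positivity)]
      nlinarith
  have hqf_val : ∫ v, ‖v - U‖ ^ 2 * f v = (d : ℝ) * ρ * T := by
    rw [hT]
    field_simp
  -- log of the Maxwellian
  have hlogM : ∀ v, Real.log (M v) = Real.log c - b * ‖v - U‖ ^ 2 := by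
    intro v
    rw [hMrw v, Real.log_mul hc_pos.ne' (Real.exp_pos _).ne', Real.log_exp]
    ring
  -- integrability of the pieces of (M - f) * log M
  have i1 : Integrable (fun v => Real.log c * M v) := hM_int.const_mul _
  have i2 : Integrable (fun v => Real.log c * f v) := hf_int.const_mul _
  have i3 : Integrable (fun v => b * (‖v - U‖ ^ 2 * M v)) := hqM_int.const_mul b
  have i4 : Integrable (fun v => b * (‖v - U‖ ^ 2 * f v)) := hqf_int.const_mul b
  have i12 : Integrable (fun v => Real.log c * M v - Real.log c * f v) := i1.sub i2
  have i123 : Integrable (fun v =>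
      Real.log c * M v - Real.log c * f v - b * (‖v - U‖ ^ 2 * M v)) := i12.sub i3
  have hMf_logM_int : Integrable (fun v => (M v - f v) * Real.log (M v)) := by
    refine (i123.add i4).congr ?_
    filter_upwards with v
    simp only [hlogM, Pi.add_apply, Pi.sub_apply]; ring
  -- the integral of (M - f) * log M vanishes
  have hMf_logM_val : ∫ v, (M v - f v) * Real.log (M v) = 0 := by
    have heq : ∫ v, (M v - f v) * Real.log (M v)
        = ∫ v, ((Real.log c * M v - Real.log c * f v - b * (‖v - U‖ ^ 2 * M v))
          + b * (‖v - U‖ ^ 2 * f v)) := by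
      refine integral_congr_ae (Eventually.of_forall fun v => ?_)
      simp only [hlogM, Pi.add_apply, Pi.sub_apply]; ring
    rw [heq, integral_add i123 i4, integral_sub i12 i3, integral_sub i1 i2,
      MeasureTheory.integral_const_mul, MeasureTheory.integral_const_mul,
      MeasureTheory.integral_const_mul, MeasureTheory.integral_const_mul,
      hM_val, hqM_val, hqf_val, ← hρ]
    ring
  -- integrability of (M - f) * log f
  have hMf_logf_int : Integrable (fun v => (M v - f v) * Real.log (f v)) := by
    refine (hQlog_int.const_mul ν⁻¹).congr ?_
    filter_upwards with v
    field_simp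
  -- the entropy production term
  set h : EuclideanSpace ℝ (Fin d) → ℝ :=
    fun v => (M v - f v) * (Real.log (M v) - Real.log (f v)) with hhdef
  have hM_pos : ∀ v, 0 < M v := fun v => by
    rw [hMrw v]; positivity
  have hh_nonneg : ∀ v, 0 ≤ h v := by
    intro v
    rcases le_total (f v) (M v) with hle | hle
    · have hlog : Real.log (f v) ≤ Real.log (M v) := Real.log_le_log (hf_pos v) hle
      simp only [hhdef]
      nlinarith
    · have hlog : Real.log (M v) ≤ Real.log (f v) := Real.log_le_log (hM_pos v) hle
      simp only [hhdef]
      nlinarith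
  have hh_int : Integrable h := by
    refine (hMf_logM_int.sub hMf_logf_int).congr ?_
    filter_upwards with v
    simp only [hhdef, Pi.sub_apply]
    ring
  have hh_val : ∫ v, h v = - ∫ v, (M v - f v) * Real.log (f v) := by
    have : ∫ v, h v = (∫ v, (M v - f v) * Real.log (M v))
        - ∫ v, (M v - f v) * Real.log (f v) := by
      rw [← integral_sub hMf_logM_int hMf_logf_int]
      refine integral_congr_ae (Eventually.of_forall fun v => ?_)
      simp only [hhdef, Pi.sub_apply]
      ring
    rw [this, hMf_logM_val]
    ring
  have hh_pos : 0 ≤ ∫ v, h v := integral_nonneg hh_nonneg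
  have hQ_val : ∫ v, ν * (M v - f v) * Real.log (f v)
      = ν * ∫ v, (M v - f v) * Real.log (f v) := by
    rw [← MeasureTheory.integral_const_mul]
    refine integral_congr_ae (Eventually.of_forall fun v => ?_)
    ring
  have hI_le : ∫ v, (M v - f v) * Real.log (f v) ≤ 0 := by linarith
  constructor
  · rw [hQ_val]
    exact mul_nonpos_of_nonneg_of_nonpos hν.le hI_le
  · constructor
    · intro hz
      rw [hQ_val] at hz
      have hI0 : ∫ v, (M v - f v) * Real.log (f v) = 0 := by
        rcases mul_eq_zero.mp hz with h' | h'
        · exact absurd h' hν.ne'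
        · exact h'
      have hint0 : ∫ v, h v = 0 := by rw [hh_val, hI0]; ring
      have hae0 : h =ᵐ[volume] 0 :=
        (integral_eq_zero_iff_of_nonneg hh_nonneg hh_int).mp hint0
      filter_upwards [hae0] with v hv
      simp only [hhdef, Pi.zero_apply] at hv
      by_contra hne
      rcases lt_or_gt_of_ne hne with hlt | hlt
      · have : Real.log (f v) < Real.log (M v) := Real.log_lt_log (hf_pos v) hlt
        nlinarith
      · have : Real.log (M v) < Real.log (f v) := Real.log_lt_log (hM_pos v) hlt
        nlinarith
    · intro hae
      have : (fun v => ν * (M v - f v) * Real.log (f v)) =ᵐ[volume] 0 := by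
        filter_upwards [hae] with v hv
        simp [hv]
      rw [integral_congr_ae this]
      simp
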